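/- Proposition (Bewley individuals, sufficiency): Suppose each individual i ∈ N has a Bewley preference (uᵢ, Pᵢ) and the planner has a variational Bewley preference (u₀, c₀). If there exist α ∈ ℝⁿ₊, β ∈ ℝ with u₀ = Σᵢ αᵢuᵢ + β and dom c₀ = {p : c₀(p) < ∞} ⊆ ⋂_{i: αᵢ>0} Pᵢ, then Standard Pareto holds. -/

import Mathlib

open Finset ENNReal

/-- `p` is a probability distribution on the finite state space `S`. -/
def IsProb {S : Type*} [Fintype S] (p : S → ℝ) : Prop :=
  (∀ s, 0 ≤ p s) ∧ ∑ s, p s = 1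

/-- `u` is an affine function. -/
def IsAffineFn {X : Type*} [AddCommGroup X] [Module ℝ X] (u : X → ℝ) : Prop :=
  ∀ x y : X, ∀ t : ℝ, u (t • x + (1 - t) • y) = t * u x + (1 - t) * u y

/-- `u` is unbounded. -/
def UnboundedFn {X : Type*} (u : X → ℝ) : Prop :=
  ∀ M : ℝ, ∃ x, M < |u x|

/-- The variational Bewley preference induced by `(u, c)`:
`f ≿ g` iff `∑ p(s)u(f(s)) + c(p) ≥ ∑ p(s)u(g(s))` for all `p ∈ Δ(S)`. -/
def VBPref {S : Type*} [Fintype S] {X : Type*} (u : X → ℝ)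
    (c : (S → ℝ) → ℝ≥0∞) (f g : S → X) : Prop :=
  ∀ p : S → ℝ, IsProb p →
    ((∑ s, p s * u (g s) : ℝ) : EReal) ≤ ((∑ s, p s * u (f s) : ℝ) : EReal) + (c p : EReal)

/-- The Bewley preference induced by `(u, P)`. -/
def BewPref {S : Type*} [Fintype S] {X : Type*} (u : X → ℝ)
    (P : Set (S → ℝ)) (f g : S → X) : Prop :=
  ∀ p ∈ P, (∑ s, p s * u (g s)) ≤ ∑ s, p s * u (f s)

/-- `min_{p ∈ Δ(S)} c(p) = 0` (the minimum value 0 is attained). -/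
def MinZero {S : Type*} [Fintype S] (c : (S → ℝ) → ℝ≥0∞) : Prop :=
  ∃ p : S → ℝ, IsProb p ∧ c p = 0

/-- Convexity of the perception function `c` on the simplex. -/
def ConvexPerc {S : Type*} [Fintype S] (c : (S → ℝ) → ℝ≥0∞) : Prop :=
  ∀ p q : S → ℝ, IsProb p → IsProb q → ∀ t : ℝ, 0 ≤ t → t ≤ 1 →
    c (fun s => t * p s + (1 - t) * q s) ≤
      ENNReal.ofReal t * c p + ENNReal.ofReal (1 - t) * c q

theorem stmt12 {S : Type*} [Fintype S] {d n : ℕ}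
    (u : Fin n → EuclideanSpace ℝ (Fin d) → ℝ) (P : Fin n → Set (S → ℝ))
    (u0 : EuclideanSpace ℝ (Fin d) → ℝ) (c0 : (S → ℝ) → ℝ≥0∞)
    (hu : ∀ i, IsAffineFn (u i))
    (hP : ∀ i, (P i).Nonempty ∧ IsClosed (P i) ∧ Convex ℝ (P i) ∧ ∀ p ∈ P i, IsProb p)
    (hu0 : IsAffineFn u0) (hc0 : MinZero c0)
    (α : Fin n → ℝ) (β : ℝ) (hα : ∀ i, 0 ≤ α i)
    (hrep : ∀ x, u0 x = ∑ i, α i * u i x + β)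
    (hdom : ∀ p : S → ℝ, IsProb p → c0 p ≠ ⊤ → ∀ i, 0 < α i → p ∈ P i) :
    ∀ f g : S → EuclideanSpace ℝ (Fin d),
      (∀ i, BewPref (u i) (P i) f g) → VBPref u0 c0 f g := by
  intro f g hfg p hp
  by_cases hc : c0 p = ⊤
  · rw [hc]
    simp [EReal.add_top_of_ne_bot]
  · have hmem : ∀ i, 0 < α i → p ∈ P i := hdom p hp hc
    have hi : ∀ i ∈ Finset.univ, α i * (∑ s, p s * u i (g s)) ≤
        α i * (∑ s, p s * u i (f s)) := by
      intro i _
      rcases lt_or_eq_of_le (hα i) with h | h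
      · exact mul_le_mul_of_nonneg_left (hfg i p (hmem i h)) (hα i)
      · simp [← h]
    have expand : ∀ h : S → EuclideanSpace ℝ (Fin d),
        ∑ s, p s * u0 (h s) = (∑ i, α i * ∑ s, p s * u i (h s)) + β := by
      intro h
      simp only [hrep]
      calc ∑ s, p s * (∑ i, α i * u i (h s) + β)
          = ∑ s, ((∑ i, p s * (α i * u i (h s))) + p s * β) := by
            simp [mul_add, Finset.mul_sum]
        _ = (∑ s, ∑ i, p s * (α i * u i (h s))) + ∑ s, p s * β := by
            rw [Finset.sum_add_distrib]
        _ = (∑ i, ∑ s, p s * (α i * u i (h s))) + β := by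
            rw [Finset.sum_comm, ← Finset.sum_mul, hp.2, one_mul]
        _ = (∑ i, α i * ∑ s, p s * u i (h s)) + β := by
            congr 1
            refine Finset.sum_congr rfl fun i _ => ?_
            rw [Finset.mul_sum]
            exact Finset.sum_congr rfl fun s _ => by ring
    have hreal : (∑ s, p s * u0 (g s)) ≤ ∑ s, p s * u0 (f s) := by
      rw [expand, expand]
      exact add_le_add_left (Finset.sum_le_sum hi) β
    calc ((∑ s, p s * u0 (g s) : ℝ) : EReal)
        ≤ ((∑ s, p s * u0 (f s) : ℝ) : EReal) := EReal.coe_le_coe_iff.mpr hreal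
      _ ≤ _ := le_add_of_nonneg_right (EReal.coe_ennreal_nonneg _)
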